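/- arXiv:2509.02155 — 5 statements merged into one kernel-verified Lean document; each statement's English description precedes it below -/
import Mathlib

section
/- Let G be an r-regular graph on n vertices and m edges, and let S(G) be its subdivision graph. Then the ABS characteristic polynomial of S(G) satisfies φ(S(G) : μ) = (r/(r+2))^n · μ^{m−n} · ψ(G : (μ²(r+2) − r²)/r), where ψ is the adjacency characteristic polynomial of G. -/
open Matrix Polynomial

/-- The atom-bond sum-connectivity (ABS) matrix of a simple graph. -/
noncomputable def absMatrix {V : Type*} [Fintype V] [DecidableEq V]
    (G : SimpleGraph V) [DecidableRel G.Adj] : Matrix V V ℝ :=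
  Matrix.of fun i j => if G.Adj i j then
    Real.sqrt (1 - 2 / ((G.degree i : ℝ) + (G.degree j : ℝ))) else 0

/-- The subdivision graph `S(G)`: one new vertex inserted on each edge of `G`. -/
def subdivisionGraph {V : Type*} (G : SimpleGraph V) : SimpleGraph (V ⊕ G.edgeSet) where
  Adj x y := match x, y with
    | Sum.inl v, Sum.inr e => v ∈ (e : Sym2 V)
    | Sum.inr e, Sum.inl v => v ∈ (e : Sym2 V)
    | _, _ => False
  symm := ⟨by rintro (v | e) (w | f) h <;> simp_all⟩
  loopless := ⟨by rintro (v | e) h <;> simp_all⟩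

section AuxABS

variable {V : Type*} [Fintype V] [DecidableEq V] (G : SimpleGraph V) [DecidableRel G.Adj]
  [DecidableRel (subdivisionGraph G).Adj]

@[simp] lemma subdiv_adj_inl_inr (v : V) (e : G.edgeSet) :
    (subdivisionGraph G).Adj (Sum.inl v) (Sum.inr e) ↔ v ∈ (e : Sym2 V) := Iff.rfl

@[simp] lemma subdiv_adj_inr_inl (v : V) (e : G.edgeSet) :
    (subdivisionGraph G).Adj (Sum.inr e) (Sum.inl v) ↔ v ∈ (e : Sym2 V) := Iff.rfl

@[simp] lemma subdiv_adj_inl_inl (v w : V) :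
    ¬ (subdivisionGraph G).Adj (Sum.inl v) (Sum.inl w) := fun h => h

@[simp] lemma subdiv_adj_inr_inr (e f : G.edgeSet) :
    ¬ (subdivisionGraph G).Adj (Sum.inr e) (Sum.inr f) := fun h => h

lemma deg_inl (v : V) : (subdivisionGraph G).degree (Sum.inl v) = G.degree v := by
  rw [show (subdivisionGraph G).degree (Sum.inl v) =
      ((subdivisionGraph G).neighborFinset (Sum.inl v)).card from rfl,
    ← SimpleGraph.card_incidenceFinset_eq_degree (G := G)]
  refine Finset.card_bij'
    (i := fun y _ => (Sum.elim (fun _ => s(v, v)) (fun e => (e : Sym2 V)) y : Sym2 V))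
    (j := fun z hz => (Sum.inr ⟨z, (G.mem_incidenceFinset v z |>.mp hz).1⟩ : V ⊕ G.edgeSet))
    ?_ ?_ ?_ ?_
  · rintro (w | e) hy
    · exact absurd ((subdivisionGraph G).mem_neighborFinset _ _ |>.mp hy) (subdiv_adj_inl_inl G v w)
    · have := (subdivisionGraph G).mem_neighborFinset _ _ |>.mp hy
      exact (G.mem_incidenceFinset v _).mpr ⟨e.2, this⟩
  · intro z hz
    rw [SimpleGraph.mem_neighborFinset]
    exact ((G.mem_incidenceFinset v z).mp hz).2
  · rintro (w | e) hy
    · exact absurd ((subdivisionGraph G).mem_neighborFinset _ _ |>.mp hy) (subdiv_adj_inl_inl G v w)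
    · rfl
  · intro z hz
    rfl

lemma deg_inr (e : G.edgeSet) : (subdivisionGraph G).degree (Sum.inr e) = 2 := by
  obtain ⟨e, he⟩ := e
  induction e with
  | _ a b =>
    have hab : a ≠ b := (G.mem_edgeSet.mp he).ne
    rw [SimpleGraph.degree]
    have : (subdivisionGraph G).neighborFinset (Sum.inr ⟨s(a,b), he⟩) =
        {Sum.inl a, Sum.inl b} := by
      ext y
      rcases y with w | f
      · simp [SimpleGraph.mem_neighborFinset, Sym2.mem_iff, eq_comm]
      · simp [SimpleGraph.mem_neighborFinset]
    rw [this, Finset.card_insert_of_notMem (by simp [hab]), Finset.card_singleton]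

lemma card_filter_mem (v : V) :
    (Finset.univ.filter fun e : G.edgeSet => v ∈ (e : Sym2 V)).card = G.degree v := by
  rw [← SimpleGraph.card_incidenceFinset_eq_degree (G := G)]
  refine Finset.card_bij'
    (i := fun e _ => ((e : Sym2 V) : Sym2 V))
    (j := fun z hz => (⟨z, (G.mem_incidenceFinset v z |>.mp hz).1⟩ : G.edgeSet))
    ?_ ?_ ?_ ?_
  · intro e he
    exact (G.mem_incidenceFinset v _).mpr ⟨e.2, (Finset.mem_filter.mp he).2⟩
  · intro z hz
    simpa using ((G.mem_incidenceFinset v z).mp hz).2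
  · intro e he; rfl
  · intro z hz; rfl

lemma FFt (r : ℕ) (hreg : G.IsRegularOfDegree r) :
    (Matrix.of fun v (e : G.edgeSet) => if v ∈ (e : Sym2 V) then (1:ℝ) else 0) *
      (Matrix.of fun v (e : G.edgeSet) => if v ∈ (e : Sym2 V) then (1:ℝ) else 0)ᵀ =
    G.adjMatrix ℝ + (r : ℝ) • 1 := by
  ext u w
  simp only [Matrix.mul_apply, Matrix.transpose_apply, Matrix.of_apply, Matrix.add_apply,
    SimpleGraph.adjMatrix_apply, Matrix.smul_apply, Matrix.one_apply, ite_mul, one_mul, zero_mul,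
    smul_eq_mul]
  simp only [← ite_and]
  rw [Finset.sum_boole]
  by_cases huw : u = w
  · subst huw
    have h1 : (Finset.univ.filter fun e : G.edgeSet => u ∈ (e : Sym2 V) ∧ u ∈ (e : Sym2 V)) =
        Finset.univ.filter fun e : G.edgeSet => u ∈ (e : Sym2 V) := by
      simp [and_self]
    rw [h1]
    simp [card_filter_mem, hreg u, G.irrefl]
  · by_cases hadj : G.Adj u w
    · have h1 : (Finset.univ.filter fun e : G.edgeSet => u ∈ (e : Sym2 V) ∧ w ∈ (e : Sym2 V)) =
          {(⟨s(u,w), G.mem_edgeSet.mpr hadj⟩ : G.edgeSet)} := by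
        ext e
        simp only [Finset.mem_filter, Finset.mem_univ, true_and, Finset.mem_singleton]
        rw [Sym2.mem_and_mem_iff huw, Subtype.ext_iff]
      rw [h1]
      simp [hadj, huw]
    · have h1 : (Finset.univ.filter fun e : G.edgeSet => u ∈ (e : Sym2 V) ∧ w ∈ (e : Sym2 V)) =
          ∅ := by
        ext e
        simp only [Finset.mem_filter, Finset.mem_univ, true_and, Finset.notMem_empty, iff_false]
        rw [Sym2.mem_and_mem_iff huw]
        intro h
        exact hadj (G.mem_edgeSet.mp (h ▸ e.2))
      rw [h1]
      simp [hadj, huw]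

lemma eval_charpoly' {n : Type*} [Fintype n] [DecidableEq n] (M : Matrix n n ℝ) (x : ℝ) :
    M.charpoly.eval x = (x • (1 : Matrix n n ℝ) - M).det := by
  rw [Matrix.charpoly, ← Polynomial.coe_evalRingHom, RingHom.map_det]
  congr 1
  ext i j
  by_cases h : i = j <;>
    simp [Matrix.charmatrix_apply, Matrix.diagonal_apply, h, Matrix.one_apply]

lemma absMatrix_subdiv (r : ℕ) (hr : 1 ≤ r) (hreg : G.IsRegularOfDegree r) :
    absMatrix (subdivisionGraph G) =
      Matrix.fromBlocks 0
        (Real.sqrt ((r:ℝ)/((r:ℝ)+2)) •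
          Matrix.of fun v (e : G.edgeSet) => if v ∈ (e : Sym2 V) then (1:ℝ) else 0)
        (Real.sqrt ((r:ℝ)/((r:ℝ)+2)) •
          (Matrix.of fun v (e : G.edgeSet) => if v ∈ (e : Sym2 V) then (1:ℝ) else 0)ᵀ)
        0 := by
  have hr2 : (0:ℝ) < (r:ℝ) + 2 := by positivity
  have key : (1 : ℝ) - 2 / ((r:ℝ) + 2) = (r:ℝ)/((r:ℝ)+2) := by field_simp; ring
  ext i j
  rcases i with v | e <;> rcases j with w | f
  · simp [absMatrix, Matrix.fromBlocks]
  · simp only [absMatrix, Matrix.of_apply, Matrix.fromBlocks_apply₁₂, Matrix.smul_apply,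
      Matrix.of_apply, subdiv_adj_inl_inr, deg_inl, deg_inr, hreg v, smul_eq_mul]
    by_cases hvf : v ∈ (f : Sym2 V) <;> simp [hvf, key]
  · simp only [absMatrix, Matrix.of_apply, Matrix.fromBlocks_apply₂₁, Matrix.smul_apply,
      Matrix.transpose_apply, Matrix.of_apply, subdiv_adj_inr_inl, deg_inl, deg_inr, hreg w,
      smul_eq_mul]
    by_cases hwf : w ∈ (e : Sym2 V) <;> simp [hwf, key]
    · rw [add_comm (2:ℝ), key]
      exact Real.sqrt_div (by positivity) _
  · simp [absMatrix, Matrix.fromBlocks]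

theorem abs_charpoly_subdivision' (r : ℕ) (hr : 1 ≤ r) (hreg : G.IsRegularOfDegree r)
    (n m : ℕ) (hn : n = Fintype.card V) (hm : m = G.edgeFinset.card) :
    X ^ n * (absMatrix (subdivisionGraph G)).charpoly =
      C (((r : ℝ) / ((r : ℝ) + 2)) ^ n) * X ^ m *
        ((G.adjMatrix ℝ).charpoly).comp
          (C (((r : ℝ) + 2) / (r : ℝ)) * X ^ 2 - C ((r : ℝ)^2 / (r : ℝ))) := by
  classical
  have hr0 : (0:ℝ) < (r:ℝ) := by exact_mod_cast hr
  have hr2 : (0:ℝ) < (r:ℝ) + 2 := by linarith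
  set c : ℝ := Real.sqrt ((r:ℝ)/((r:ℝ)+2)) with hcdef
  have hc2 : c ^ 2 = (r:ℝ)/((r:ℝ)+2) := Real.sq_sqrt (by positivity)
  set F : Matrix V G.edgeSet ℝ :=
    Matrix.of fun v (e : G.edgeSet) => if v ∈ (e : Sym2 V) then (1:ℝ) else 0 with hFdef
  have hB : absMatrix (subdivisionGraph G) = Matrix.fromBlocks 0 (c • F) (c • Fᵀ) 0 :=
    absMatrix_subdiv G r hr hreg
  apply Polynomial.eq_of_infinite_eval_eq
  refine Set.Infinite.mono ?_ ((Set.finite_singleton (0:ℝ)).infinite_compl)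
  intro x hx
  have hx : x ≠ 0 := by simpa using hx
  simp only [Set.mem_setOf_eq, eval_mul, eval_pow, eval_X, eval_C, eval_comp, eval_sub]
  rw [eval_charpoly', eval_charpoly', hB]
  -- block decomposition of the characteristic matrix
  have hsplit : x • (1 : Matrix (V ⊕ G.edgeSet) (V ⊕ G.edgeSet) ℝ) -
      Matrix.fromBlocks 0 (c • F) (c • Fᵀ) 0 =
      Matrix.fromBlocks (x • 1) (-(c • F)) (-(c • Fᵀ)) (x • 1) := by
    rw [← Matrix.fromBlocks_one, Matrix.fromBlocks_smul, sub_eq_add_neg, Matrix.fromBlocks_neg,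
      Matrix.fromBlocks_add]
    simp
  rw [hsplit]
  letI : Invertible (x • (1 : Matrix G.edgeSet G.edgeSet ℝ)) :=
    ⟨x⁻¹ • 1, by rw [Matrix.smul_mul, Matrix.one_mul, smul_smul, inv_mul_cancel₀ hx, one_smul],
      by rw [Matrix.smul_mul, Matrix.one_mul, smul_smul, mul_inv_cancel₀ hx, one_smul]⟩
  rw [Matrix.det_fromBlocks₂₂]
  have hinv : ⅟(x • (1 : Matrix G.edgeSet G.edgeSet ℝ)) = x⁻¹ • 1 := rfl
  have hDdet : (x • (1 : Matrix G.edgeSet G.edgeSet ℝ)).det = x ^ m := by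
    rw [Matrix.det_smul, Matrix.det_one, mul_one, hm, G.edgeFinset_card]
  have hSchur : x • (1 : Matrix V V ℝ) - -(c • F) * ⅟(x • (1 : Matrix G.edgeSet G.edgeSet ℝ)) *
      -(c • Fᵀ) = x • 1 - (c^2 * x⁻¹) • (G.adjMatrix ℝ + (r:ℝ) • 1) := by
    rw [hinv, Matrix.neg_mul, Matrix.neg_mul, Matrix.mul_neg, neg_neg]
    simp only [Matrix.smul_mul, Matrix.mul_smul, Matrix.mul_one, smul_smul]
    rw [hFdef, FFt G r hreg]
    module
  rw [hSchur, hDdet]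
  -- pull x^n into the determinant
  have hcardV : Fintype.card V = n := hn.symm
  have hxdet : x ^ n * (x • (1 : Matrix V V ℝ) -
      (c^2 * x⁻¹) • (G.adjMatrix ℝ + (r:ℝ) • 1)).det =
      ((x^2 - c^2 * (r:ℝ)) • (1 : Matrix V V ℝ) - c^2 • G.adjMatrix ℝ).det := by
    rw [hn, ← Matrix.det_smul]
    congr 1
    have h1 : x * (c ^ 2 * x⁻¹) = c ^ 2 := by field_simp
    rw [smul_sub, smul_smul, smul_smul, h1]
    module
  calc x ^ n * (x ^ m * (x • (1 : Matrix V V ℝ) -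
        (c^2 * x⁻¹) • (G.adjMatrix ℝ + (r:ℝ) • 1)).det)
      = x ^ m * (x ^ n * (x • (1 : Matrix V V ℝ) -
        (c^2 * x⁻¹) • (G.adjMatrix ℝ + (r:ℝ) • 1)).det) := by ring
    _ = x ^ m * ((x^2 - c^2 * (r:ℝ)) • (1 : Matrix V V ℝ) - c^2 • G.adjMatrix ℝ).det := by
        rw [hxdet]
    _ = ((r:ℝ)/((r:ℝ)+2))^n * x ^ m *
        ((((r:ℝ)+2)/(r:ℝ) * x^2 - (r:ℝ)^2/(r:ℝ)) • (1 : Matrix V V ℝ) - G.adjMatrix ℝ).det := by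
        have hmat : (x^2 - c^2 * (r:ℝ)) • (1 : Matrix V V ℝ) - c^2 • G.adjMatrix ℝ =
            c^2 • ((((r:ℝ)+2)/(r:ℝ) * x^2 - (r:ℝ)^2/(r:ℝ)) • (1 : Matrix V V ℝ)
              - G.adjMatrix ℝ) := by
          rw [smul_sub, smul_smul]
          congr 2
          rw [hc2]
          field_simp
        rw [hmat, Matrix.det_smul, hcardV, hc2]
        ring

end AuxABS

/-- For an `r`-regular graph `G` on `n` vertices and `m` edges,
`φ(S(G) : μ) = (r/(r+2))^n · μ^{m−n} · ψ(G : (μ²(r+2) − r²)/r)`, stated here multiplied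
through by `μ^n` so that only natural exponents appear. -/
theorem abs_charpoly_subdivision {V : Type*} [Fintype V] [DecidableEq V]
    (G : SimpleGraph V) [DecidableRel G.Adj]
    [Fintype (subdivisionGraph G).edgeSet] [DecidableRel (subdivisionGraph G).Adj]
    (r : ℕ) (hr : 1 ≤ r) (hreg : G.IsRegularOfDegree r)
    (n m : ℕ) (hn : n = Fintype.card V) (hm : m = G.edgeFinset.card) :
    X ^ n * (absMatrix (subdivisionGraph G)).charpoly =
      C (((r : ℝ) / ((r : ℝ) + 2)) ^ n) * X ^ m *
        ((G.adjMatrix ℝ).charpoly).comp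
          (C (((r : ℝ) + 2) / (r : ℝ)) * X ^ 2 - C ((r : ℝ)^2 / (r : ℝ))) :=
  abs_charpoly_subdivision' G r hr hreg n m hn hm
end

section
/- For n ≥ 5, the ABS characteristic polynomial of the path P_n satisfies φ(P_n : μ) = μ²·Ω_{n−2} − (2/3)·μ·Ω_{n−3} + (1/9)·Ω_{n−4}, where the sequence Ω is defined by Ω_1 = μ, Ω_2 = μ² − 1/2, and Ω_m = μ·Ω_{m−1} − (1/2)·Ω_{m−2} for m ≥ 3. -/
open Matrix Polynomial

/-- `Ω_m`: the determinant of the `m × m` tridiagonal matrix with `μ` on the diagonal and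
`−√(1/2)` on the sub/super-diagonals, as a polynomial in `μ`; it satisfies `Ω_1 = μ`,
`Ω_2 = μ² − 1/2` and `Ω_m = μΩ_{m−1} − (1/2)Ω_{m−2}`. -/
noncomputable def OmegaPoly : ℕ → Polynomial ℝ
  | 0 => 1
  | 1 => X
  | (m + 2) => X * OmegaPoly (m + 1) - C (1 / 2 : ℝ) * OmegaPoly m

section Aux

open Finset SimpleGraph

variable {R : Type*} [CommRing R]

def triEnt (d c : ℕ → R) (i j : ℕ) : R :=
  if i = j then d i else if i + 1 = j then c i else if j + 1 = i then c j else 0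

def triMat (d c : ℕ → R) (n : ℕ) : Matrix (Fin n) (Fin n) R :=
  Matrix.of fun i j => triEnt d c i j

def triDet (d c : ℕ → R) : ℕ → R
  | 0 => 1
  | 1 => d 0
  | (k+2) => d (k+1) * triDet d c (k+1) - c k * c k * triDet d c k

lemma succAbove_castSucc_last_val (k : ℕ) (j : Fin (k+1)) :
    (((Fin.last k).castSucc).succAbove j : ℕ) = if (j:ℕ) < k then (j:ℕ) else (j:ℕ)+1 := by
  simp only [Fin.succAbove, Fin.lt_def, Fin.coe_castSucc, Fin.val_last]
  split <;> simp_all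

theorem triMat_det (d c : ℕ → R) : ∀ n, (triMat d c n).det = triDet d c n := by
  intro n
  induction n using Nat.strong_induction_on with
  | _ n ih =>
    match n with
    | 0 => simp [triMat, triDet]
    | 1 => simp [triMat, triDet, triEnt, det_fin_one]
    | (k+2) =>
      rw [det_succ_row (triMat d c (k+2)) (Fin.last (k+1))]
      rw [Fin.sum_univ_castSucc, Fin.sum_univ_castSucc]
      have hzero : ∀ j : Fin k,
          (triMat d c (k+2)) (Fin.last (k+1)) ((j.castSucc).castSucc) = 0 := by
        intro j
        have hj : (j : ℕ) < k := j.isLt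
        simp only [triMat, Matrix.of_apply, triEnt, Fin.coe_castSucc, Fin.val_last]
        rw [if_neg (show ¬(k + 1 = (j:ℕ)) by omega),
          if_neg (show ¬(k + 1 + 1 = (j:ℕ)) by omega),
          if_neg (show ¬((j:ℕ) + 1 = k + 1) by omega)]
      rw [Finset.sum_eq_zero (fun j _ => by rw [hzero j]; ring)]
      have hlast : ((Fin.last (k+1)).succAbove : Fin (k+1) → Fin (k+2)) = Fin.castSucc :=
        Fin.succAbove_last
      rw [hlast]
      -- entries
      have he1 : (triMat d c (k+2)) (Fin.last (k+1)) (Fin.last (k+1)) = d (k+1) := by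
        simp [triMat, triEnt]
      have he2 : (triMat d c (k+2)) (Fin.last (k+1)) ((Fin.last k).castSucc) = c k := by
        simp only [triMat, Matrix.of_apply, triEnt, Fin.coe_castSucc, Fin.val_last]
        rw [if_neg (show ¬(k + 1 = k) by omega),
          if_neg (show ¬(k + 1 + 1 = k) by omega)]
        simp
      -- last minor
      have hm1 : (triMat d c (k+2)).submatrix Fin.castSucc Fin.castSucc = triMat d c (k+1) := by
        ext i j
        simp [triMat, submatrix_apply]
      -- middle minor
      have hm2 : ((triMat d c (k+2)).submatrix (Fin.castSucc : Fin (k+1) → Fin (k+2))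
          ((Fin.last k).castSucc.succAbove)).det = c k * triDet d c k := by
        rw [det_succ_column _ (Fin.last k), Fin.sum_univ_castSucc]
        have hz : ∀ i : Fin k,
            ((triMat d c (k+2)).submatrix (Fin.castSucc : Fin (k+1) → Fin (k+2))
              ((Fin.last k).castSucc.succAbove)) i.castSucc (Fin.last k) = 0 := by
          intro i
          have hi : (i : ℕ) < k := i.isLt
          simp only [submatrix_apply, triMat, Matrix.of_apply, triEnt,
            succAbove_castSucc_last_val, Fin.coe_castSucc, Fin.val_last,
            lt_irrefl, if_false]
          rw [if_neg (show ¬((i:ℕ) = k + 1) by omega),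
            if_neg (show ¬((i:ℕ) + 1 = k + 1) by omega),
            if_neg (show ¬(k + 1 + 1 = (i:ℕ)) by omega)]
        rw [Finset.sum_eq_zero (fun i _ => by rw [hz i]; ring)]
        have he : ((triMat d c (k+2)).submatrix (Fin.castSucc : Fin (k+1) → Fin (k+2))
            ((Fin.last k).castSucc.succAbove)) (Fin.last k) (Fin.last k) = c k := by
          simp only [submatrix_apply, triMat, Matrix.of_apply, triEnt]
          have : ((((Fin.last k).castSucc).succAbove (Fin.last k)) : ℕ) = k + 1 := by
            rw [succAbove_castSucc_last_val]; simp
          rw [this, Fin.coe_castSucc, Fin.val_last]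
          rw [if_neg (show ¬(k = k + 1) by omega)]
          simp
        rw [he, show ((Fin.last k).succAbove : Fin k → Fin (k+1)) = Fin.castSucc
          from Fin.succAbove_last]
        have hm : (((triMat d c (k+2)).submatrix (Fin.castSucc : Fin (k+1) → Fin (k+2))
            ((Fin.last k).castSucc.succAbove)).submatrix Fin.castSucc
            (Fin.castSucc : Fin k → Fin (k+1))) = triMat d c k := by
          ext i j
          have hj : (j:ℕ) < k := j.isLt
          simp only [submatrix_apply, triMat, Matrix.of_apply]
          congr 1
          rw [succAbove_castSucc_last_val]
          simp [Fin.coe_castSucc, if_pos hj]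
        rw [hm, ih k (by omega)]
        simp only [Fin.val_last]
        have : ((-1 : R)) ^ (k + k) = 1 := Even.neg_one_pow ⟨k, by ring⟩
        rw [this]; ring
      rw [he1, he2, hm1, hm2, ih (k+1) (by omega)]
      simp only [Fin.val_last, Fin.coe_castSucc]
      have h1 : ((-1 : R)) ^ (k + 1 + k) = -1 := Odd.neg_one_pow ⟨k, by ring⟩
      have h2 : ((-1 : R)) ^ (k + 1 + (k + 1)) = 1 := Even.neg_one_pow ⟨k+1, by ring⟩
      rw [h1, h2]
      show _ = d (k+1) * triDet d c (k+1) - c k * c k * triDet d c k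
      ring


noncomputable def gam (n : ℕ) (i : ℕ) : ℝ := if i = 0 ∨ i + 2 = n then 1/3 else 1/2

lemma pathGraph_degree (n : ℕ) (hn : 2 ≤ n) (i : Fin n)
    [DecidableRel (pathGraph n).Adj] :
    (pathGraph n).degree i = if (i:ℕ) = 0 then 1 else if (i:ℕ) = n - 1 then 1 else 2 := by
  rw [← SimpleGraph.card_neighborFinset_eq_degree]
  by_cases h0 : (i:ℕ) = 0
  · have : (pathGraph n).neighborFinset i = {(⟨1, by omega⟩ : Fin n)} := by
      ext j
      simp only [SimpleGraph.mem_neighborFinset, SimpleGraph.pathGraph_adj,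
        Finset.mem_singleton, Fin.ext_iff]
      have := j.isLt
      omega
    rw [this, if_pos h0]
    simp
  · by_cases h1 : (i:ℕ) = n - 1
    · have : (pathGraph n).neighborFinset i = {(⟨n-2, by omega⟩ : Fin n)} := by
        ext j
        simp only [SimpleGraph.mem_neighborFinset, SimpleGraph.pathGraph_adj,
          Finset.mem_singleton, Fin.ext_iff]
        have := j.isLt
        have := i.isLt
        omega
      rw [this, if_neg h0, if_pos h1]
      simp
    · have hi := i.isLt
      have : (pathGraph n).neighborFinset i =
          {(⟨(i:ℕ)-1, by omega⟩ : Fin n), (⟨(i:ℕ)+1, by omega⟩ : Fin n)} := by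
        ext j
        simp only [SimpleGraph.mem_neighborFinset, SimpleGraph.pathGraph_adj,
          Finset.mem_insert, Finset.mem_singleton, Fin.ext_iff]
        have := j.isLt
        omega
      rw [this, if_neg h0, if_neg h1]
      rw [Finset.card_insert_of_notMem (by simp [Fin.ext_iff])]
      simp

lemma charmatrix_path (n : ℕ) (hn : 5 ≤ n) [DecidableRel (pathGraph n).Adj] :
    charmatrix (absMatrix (pathGraph n)) =
      triMat (fun _ => (X : Polynomial ℝ)) (fun i => -C (Real.sqrt (gam n i))) n := by
  have key : ∀ i j : Fin n, (i:ℕ) + 1 = (j:ℕ) →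
      absMatrix (pathGraph n) i j = Real.sqrt (gam n i) := by
    intro i j hadj
    have hi := i.isLt; have hj := j.isLt
    have hA : (pathGraph n).Adj i j := pathGraph_adj.2 (Or.inl hadj)
    have hdi := pathGraph_degree n (by omega) i
    have hdj := pathGraph_degree n (by omega) j
    simp only [absMatrix, Matrix.of_apply, if_pos hA]
    congr 1
    rw [hdi, hdj, gam]
    by_cases h0 : (i:ℕ) = 0
    · rw [if_pos h0, if_neg (by omega), if_neg (by omega), if_pos (Or.inl h0)]
      norm_num
    · rw [if_neg h0]
      by_cases h1 : (j:ℕ) = n - 1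
      · rw [if_neg (by omega), if_pos h1, if_neg (by omega), if_pos (Or.inr (by omega))]
        norm_num
      · rw [if_neg (by omega), if_neg (by omega), if_neg h1,
          if_neg (by push_neg; exact ⟨h0, by omega⟩)]
        norm_num
  apply Matrix.ext
  intro i j
  have hi := i.isLt; have hj := j.isLt
  by_cases hij : i = j
  · subst hij
    rw [charmatrix_apply_eq]
    have h0 : absMatrix (pathGraph n) i i = 0 := by
      simp [absMatrix]
    rw [h0]
    simp [triMat, triEnt]
  · have hvij : ¬ ((i:ℕ) = (j:ℕ)) := fun h => hij (Fin.ext h)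
    rw [charmatrix_apply_ne _ _ _ hij]
    simp only [triMat, Matrix.of_apply, triEnt, if_neg hvij]
    by_cases hadj : (i:ℕ) + 1 = (j:ℕ)
    · rw [if_pos hadj, key i j hadj]
    · rw [if_neg hadj]
      by_cases hadj2 : (j:ℕ) + 1 = (i:ℕ)
      · rw [if_pos hadj2, ← key j i hadj2]
        congr 1
        simp only [absMatrix, Matrix.of_apply]
        rw [if_pos (pathGraph_adj.2 (Or.inr hadj2)), if_pos (pathGraph_adj.2 (Or.inl hadj2))]
        ring_nf
      · rw [if_neg hadj2]
        have : ¬ (pathGraph n).Adj i j := by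
          rw [pathGraph_adj]; push_neg; exact ⟨hadj, hadj2⟩
        simp [absMatrix, this]

lemma alg_main (m : ℕ) :
    triDet (fun _ => (X : Polynomial ℝ)) (fun i => -C (Real.sqrt (gam (m+5) i))) (m+5) =
      X ^ 2 * OmegaPoly (m + 3) - C (2 / 3 : ℝ) * X * OmegaPoly (m + 2) +
        C (1 / 9 : ℝ) * OmegaPoly (m + 1) := by
  set n := m + 5 with hn
  set c : ℕ → Polynomial ℝ := fun i => -C (Real.sqrt (gam n i)) with hc
  set d : ℕ → Polynomial ℝ := fun _ => X with hd
  have hsq : ∀ k, c k * c k = C (gam n k) := by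
    intro k
    rw [hc]
    simp only
    rw [neg_mul_neg, ← C_mul, Real.mul_self_sqrt]
    unfold gam; split <;> norm_num
  have hrec : ∀ k, triDet d c (k+2) = X * triDet d c (k+1) - C (gam n k) * triDet d c k := by
    intro k
    show d (k+1) * triDet d c (k+1) - c k * c k * triDet d c k = _
    rw [hsq]
  have hg0 : gam n 0 = 1/3 := if_pos (Or.inl rfl)
  have hgmid : ∀ k, k ≠ 0 → k + 2 ≠ n → gam n k = 1/2 := by
    intro k h1 h2
    exact if_neg (by push_neg; exact ⟨h1, h2⟩)
  have hglast : gam n (n-2) = 1/3 := if_pos (Or.inr (by omega))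
  have claim : ∀ k, k + 3 ≤ n → triDet d c (k+2) =
      X * OmegaPoly (k+1) - C (1/3 : ℝ) * OmegaPoly k := by
    intro k
    induction k using Nat.strong_induction_on with
    | _ k ih =>
      match k with
      | 0 =>
        intro _
        rw [hrec 0, hg0]
        show X * d 0 - _ * 1 = _
        rw [hd]
        simp [OmegaPoly]
      | 1 =>
        intro hk
        rw [hrec 1, hgmid 1 (by omega) (by omega), hrec 0, hg0]
        show X * (X * d 0 - _ * 1) - _ * d 0 = _
        rw [hd]
        simp only [OmegaPoly, mul_one]
        ring
      | (k+2) =>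
        intro hk
        rw [hrec (k+2), hgmid (k+2) (by omega) (by omega),
          ih (k+1) (by omega) (by omega), ih k (by omega) (by omega)]
        show _ = X * OmegaPoly (k+3) - C (1/3:ℝ) * OmegaPoly (k+2)
        rw [show OmegaPoly (k+3) = X * OmegaPoly (k+2) - C (1/2:ℝ) * OmegaPoly (k+1) from rfl,
          show OmegaPoly (k+2) = X * OmegaPoly (k+1) - C (1/2:ℝ) * OmegaPoly k from rfl]
        ring
  have h1 : triDet d c n = X * triDet d c (n-1) - C (1/3 : ℝ) * triDet d c (n-2) := by
    rw [show n = (m+3)+2 by omega, hrec (m+3),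
      show gam n (m+3) = 1/3 by rw [show m+3 = n-2 by omega]; exact hglast]
    rfl
  rw [h1, show n - 1 = (m+2)+2 by omega, show n - 2 = (m+1)+2 by omega,
    claim (m+2) (by omega), claim (m+1) (by omega)]
  have : (C (2/3 : ℝ) : Polynomial ℝ) = C (1/3:ℝ) + C (1/3:ℝ) := by
    rw [← C_add]; norm_num
  rw [this, show (C (1/9 : ℝ) : Polynomial ℝ) = C (1/3:ℝ) * C (1/3:ℝ) by rw [← C_mul]; norm_num]
  ring

end Aux

/-- For `n ≥ 5`, the ABS characteristic polynomial of the path `P_n` satisfies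
`φ(P_n : μ) = μ²Ω_{n−2} − (2/3)μΩ_{n−3} + (1/9)Ω_{n−4}`. -/
theorem abs_charpoly_path (n : ℕ) (hn : 5 ≤ n)
    [DecidableRel (SimpleGraph.pathGraph n).Adj] :
    (absMatrix (SimpleGraph.pathGraph n)).charpoly =
      X ^ 2 * OmegaPoly (n - 2) - C (2 / 3 : ℝ) * X * OmegaPoly (n - 3) +
        C (1 / 9 : ℝ) * OmegaPoly (n - 4) := by
  obtain ⟨m, rfl⟩ : ∃ m, n = m + 5 := ⟨n - 5, by omega⟩
  rw [show (absMatrix (SimpleGraph.pathGraph (m+5))).charpoly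
      = (charmatrix (absMatrix (SimpleGraph.pathGraph (m+5)))).det from rfl,
    charmatrix_path (m+5) (by omega), triMat_det,
    show m + 5 - 2 = m + 3 by omega, show m + 5 - 3 = m + 2 by omega,
    show m + 5 - 4 = m + 1 by omega]
  exact alg_main m
end

section
/- Let G be an r-regular graph on n vertices. Then the ABS energy of the k-shadow graph D_k(G) satisfies E_ABS(D_k(G)) = k·√(1 − 1/(kr))·E_A(G), where E_A(G) is the ordinary (adjacency) energy of G. Equivalently, the ABS matrix of D_k(G) equals √((2kr−2)/(2kr))·(J_k ⊗ A(G)) where J_k is the all-ones k×k matrix, and its eigenvalues are √((2kr−2)/(2kr))·k·λ_j and 0, for adjacency eigenvalues λ_j of G. -/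
open Matrix Polynomial
open Kronecker

/-- The `k`-shadow graph `D_k(G)`: take `k` copies of `G` and join each vertex of copy `i`
to all neighbours of the corresponding vertex in copy `j`, for all `i, j`. -/
def shadowGraph {V : Type*} (k : ℕ) (G : SimpleGraph V) : SimpleGraph (Fin k × V) where
  Adj x y := G.Adj x.2 y.2
  symm := ⟨fun _ _ h => G.adj_symm h⟩
  loopless := ⟨fun x h => G.irrefl (v := x.2) h⟩

instance {V : Type*} (k : ℕ) (G : SimpleGraph V) [DecidableRel G.Adj] :
    DecidableRel (shadowGraph k G).Adj := fun x y =>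
  inferInstanceAs (Decidable (G.Adj x.2 y.2))

lemma my_charpoly_conj {m R : Type*} [Fintype m] [DecidableEq m] [CommRing R]
    (M P P' : Matrix m m R) (h : P * P' = 1) :
    (P * M * P').charpoly = M.charpoly := by
  have hC : ∀ (A B : Matrix m m R), (A * B).map (C : R →+* R[X]) = A.map C * B.map C := by
    intro A B; exact Matrix.map_mul
  have key : charmatrix (P * M * P') = P.map C * charmatrix M * P'.map C := by
    rw [charmatrix, charmatrix]
    simp only [RingHom.mapMatrix_apply, mul_sub, sub_mul]
    congr 1
    · symm
      rw [← (scalar_commute (X : R[X]) (Commute.all _) (P.map C)).eq, mul_assoc, ← hC, h]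
      simp
    · rw [← hC, ← hC]
  unfold Matrix.charpoly
  rw [key, det_mul, det_mul, mul_comm, ← mul_assoc, ← det_mul, ← Matrix.map_mul]
  rw [show P' * P = 1 from mul_eq_one_comm.mp h]
  simp

lemma my_charpoly_diagonal {m R : Type*} [Fintype m] [DecidableEq m] [CommRing R] (d : m → R) :
    (Matrix.diagonal d).charpoly = ∏ i, (X - C (d i)) := by
  have : charmatrix (Matrix.diagonal d) = Matrix.diagonal fun i => X - C (d i) := by
    ext i j
    by_cases hij : i = j
    · subst hij; simp
    · simp [charmatrix_apply_ne _ _ _ hij, Matrix.diagonal_apply_ne _ hij]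
  rw [Matrix.charpoly, this, det_diagonal]

lemma my_charpoly_blockDiagonal {m o R : Type*} [Fintype m] [DecidableEq m] [Fintype o]
    [DecidableEq o] [CommRing R] (f : o → Matrix m m R) :
    (Matrix.blockDiagonal f).charpoly = ∏ a, (f a).charpoly := by
  have : charmatrix (Matrix.blockDiagonal f) = Matrix.blockDiagonal fun a => charmatrix (f a) := by
    ext ⟨i, a⟩ ⟨j, b⟩
    by_cases hab : a = b
    · subst hab
      by_cases hij : i = j
      · subst hij; simp [charmatrix_apply, blockDiagonal_apply]
      · simp [charmatrix_apply, blockDiagonal_apply, Matrix.diagonal_apply, hij, Prod.ext_iff]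
    · simp [charmatrix_apply, blockDiagonal_apply, Matrix.diagonal_apply, hab, Prod.ext_iff]
  rw [Matrix.charpoly, this, det_blockDiagonal]
  rfl

lemma my_charpoly_smul_hermitian {m : Type*} [Fintype m] [DecidableEq m]
    {A : Matrix m m ℝ} (hA : A.IsHermitian) (t : ℝ) :
    (t • A).charpoly = ∏ i, (X - C (t * hA.eigenvalues i)) := by
  have hU : (hA.eigenvectorUnitary : Matrix m m ℝ) * star (hA.eigenvectorUnitary : Matrix m m ℝ)
      = 1 := (Matrix.mem_unitaryGroup_iff).mp (hA.eigenvectorUnitary).2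
  have hd : (Matrix.diagonal fun i => t * hA.eigenvalues i)
      = t • Matrix.diagonal (RCLike.ofReal ∘ hA.eigenvalues) := by
    rw [← Matrix.diagonal_smul]
    congr 1
  have key : t • A = (hA.eigenvectorUnitary : Matrix m m ℝ) *
      Matrix.diagonal (fun i => t * hA.eigenvalues i) *
      star (hA.eigenvectorUnitary : Matrix m m ℝ) := by
    rw [hd, Matrix.mul_smul, Matrix.smul_mul]
    congr 1
    exact hA.spectral_theorem
  rw [key, my_charpoly_conj _ _ _ hU, my_charpoly_diagonal]

lemma my_eigen_multiset {ι κ : Type*} [Fintype ι] [Fintype κ] (f : ι → ℝ) (g : κ → ℝ) (m : ℕ)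
    (h : ∏ i, (X - C (f i)) = (∏ j, (X - C (g j))) * X ^ m) :
    (Finset.univ.val.map f) = (Finset.univ.val.map g) + Multiset.replicate m 0 := by
  have h1 : ∏ i, (X - C (f i)) = ((Finset.univ.val.map f).map fun a => X - C a).prod := by
    rw [Finset.prod_eq_multiset_prod, Multiset.map_map]; rfl
  have h2 : (∏ j, (X - C (g j))) * X ^ m =
      (((Finset.univ.val.map g) + Multiset.replicate m 0).map fun a => X - C a).prod := by
    rw [Multiset.map_add, Multiset.prod_add, Multiset.map_map, Multiset.map_replicate,
      Multiset.prod_replicate]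
    simp [Function.comp]
  have := congrArg Polynomial.roots (h1.symm.trans (h.trans h2))
  rwa [Polynomial.roots_multiset_prod_X_sub_C, Polynomial.roots_multiset_prod_X_sub_C] at this

/-- For an `r`-regular graph `G`, the ABS matrix of the `k`-shadow graph `D_k(G)` equals
`√((2kr−2)/(2kr)) · (J_k ⊗ A(G))`, and the ABS energy satisfies
`E_ABS(D_k(G)) = k·√(1 − 1/(kr))·E_A(G)`. -/
theorem abs_energy_shadow {V : Type*} [Fintype V] [DecidableEq V]
    (G : SimpleGraph V) [DecidableRel G.Adj] (r k : ℕ) (hr : 1 ≤ r) (hk : 1 ≤ k)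
    (hreg : G.IsRegularOfDegree r)
    (h1 : (absMatrix (shadowGraph k G)).IsHermitian)
    (h2 : (G.adjMatrix ℝ).IsHermitian) :
    absMatrix (shadowGraph k G) =
      Real.sqrt ((2 * (k : ℝ) * r - 2) / (2 * (k : ℝ) * r)) •
        Matrix.kroneckerMap (· * ·) (Matrix.of fun _ _ : Fin k => (1 : ℝ))
          (G.adjMatrix ℝ) ∧
    ∑ i, |h1.eigenvalues i| =
      (k : ℝ) * Real.sqrt (1 - 1 / ((k : ℝ) * r)) * ∑ j, |h2.eigenvalues j| := by
  classical
  haveI : NeZero k := ⟨by omega⟩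
  have hk1 : (1:ℝ) ≤ (k:ℝ) := by exact_mod_cast hk
  have hr1 : (1:ℝ) ≤ (r:ℝ) := by exact_mod_cast hr
  have hk0 : (k:ℝ) ≠ 0 := by linarith
  have hkr : (0:ℝ) < (k:ℝ) * r := by nlinarith
  set n := Fintype.card V with hn
  set c : ℝ := Real.sqrt ((2 * (k : ℝ) * r - 2) / (2 * (k : ℝ) * r)) with hc
  have hc0 : 0 ≤ c := Real.sqrt_nonneg _
  -- degrees in the shadow graph
  have hdeg : ∀ x : Fin k × V, (shadowGraph k G).degree x = k * r := by
    intro x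
    have hnb : (shadowGraph k G).neighborFinset x = Finset.univ ×ˢ G.neighborFinset x.2 := by
      ext y
      simp [SimpleGraph.mem_neighborFinset, Finset.mem_product, shadowGraph]
      exact SimpleGraph.mem_neighborFinset _ _ _
    rw [← SimpleGraph.card_neighborFinset_eq_degree, hnb, Finset.card_product, Finset.card_univ,
      Fintype.card_fin, SimpleGraph.card_neighborFinset_eq_degree, hreg x.2]
  -- Part 1
  have part1 : absMatrix (shadowGraph k G) =
      c • Matrix.kroneckerMap (· * ·) (Matrix.of fun _ _ : Fin k => (1 : ℝ)) (G.adjMatrix ℝ) := by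
    ext x y
    by_cases h : G.Adj x.2 y.2
    · have hxy : (shadowGraph k G).Adj x y := h
      simp only [absMatrix, Matrix.of_apply, Matrix.smul_apply, Matrix.kroneckerMap_apply,
        SimpleGraph.adjMatrix_apply, hxy, if_true, h, smul_eq_mul, mul_one, one_mul]
      rw [hdeg x, hdeg y, hc]
      congr 1
      push_cast
      field_simp
      ring
    · have hxy : ¬ (shadowGraph k G).Adj x y := h
      simp [absMatrix, hxy, h]
  refine ⟨part1, ?_⟩
  -- Part 2
  set A := G.adjMatrix ℝ with hA
  set J : Matrix (Fin k) (Fin k) ℝ := Matrix.of fun _ _ => (1:ℝ) with hJ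
  set B : Matrix V V ℝ := c • A with hB
  have hMJB : absMatrix (shadowGraph k G) = J ⊗ₖ B := by
    rw [part1, hB, Matrix.kronecker_smul]
  set W : Matrix (Fin k) (Fin k) ℝ :=
    Matrix.of fun i j => if j = 0 then 1 else if i = 0 then 1 else if i = j then -1 else 0 with hW
  set W' : Matrix (Fin k) (Fin k) ℝ :=
    Matrix.of fun i j => (k:ℝ)⁻¹ - (if i = 0 then 0 else if i = j then 1 else 0) with hW'
  have colsum : ∀ j, ∑ l, W l j = if j = 0 then (k:ℝ) else 0 := by
    intro j
    by_cases hj : j = 0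
    · subst hj; simp [hW]
    · have hsplit : ∀ l : Fin k, W l j
          = (if l = 0 then (1:ℝ) else 0) + (if l = j then (-1:ℝ) else 0) := by
        intro l
        by_cases hl0 : l = 0
        · subst hl0
          simp [hW, hj, (show (0:Fin k) ≠ j from fun h => hj h.symm)]
        · by_cases hlj : l = j
          · subst hlj; simp [hW, hj, hl0]
          · simp [hW, hj, hl0, hlj]
      rw [if_neg hj, Finset.sum_congr rfl fun l _ => hsplit l, Finset.sum_add_distrib]
      simp
  have rowsum : ∀ i, ∑ l, W' i l = if i = 0 then (1:ℝ) else 0 := by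
    intro i
    by_cases hi : i = 0
    · subst hi
      simp [hW', Finset.sum_const, mul_inv_cancel₀ hk0]
    · have hsplit : ∀ l : Fin k, W' i l = (k:ℝ)⁻¹ - (if l = i then (1:ℝ) else 0) := by
        intro l
        by_cases hli : l = i
        · subst hli; simp [hW', hi]
        · simp [hW', hi, hli, Ne.symm hli, eq_comm]
      rw [if_neg hi, Finset.sum_congr rfl fun l _ => hsplit l, Finset.sum_sub_distrib]
      simp [Finset.sum_const, mul_inv_cancel₀ hk0]
  have hW'W : W' * W = 1 := by
    ext i j
    rw [Matrix.mul_apply]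
    by_cases hi : i = 0
    · subst hi
      have hrow : ∀ l, W' 0 l = (k:ℝ)⁻¹ := by intro l; simp [hW']
      simp_rw [hrow]
      rw [← Finset.mul_sum, colsum j]
      by_cases hj : j = 0
      · subst hj; simp [Matrix.one_apply, inv_mul_cancel₀ hk0]
      · simp [Matrix.one_apply, hj, Ne.symm hj]
    · have hsplit : ∀ l, W' i l * W l j
          = (k:ℝ)⁻¹ * W l j - (if l = i then W l j else 0) := by
        intro l
        by_cases hli : l = i
        · subst hli; simp [hW', hi]; ring
        · simp [hW', hi, hli, Ne.symm hli]
      rw [Finset.sum_congr rfl fun l _ => hsplit l, Finset.sum_sub_distrib, ← Finset.mul_sum,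
        colsum j, Finset.sum_ite_eq' Finset.univ i]
      simp only [Finset.mem_univ, if_true]
      by_cases hj : j = 0
      · subst hj
        simp [hW, hi, Matrix.one_apply, inv_mul_cancel₀ hk0]
      · rw [if_neg hj, mul_zero, zero_sub]
        by_cases hij : i = j
        · subst hij; simp [hW, hj, hi, Matrix.one_apply]
        · simp [hW, hj, hi, hij, Matrix.one_apply]
  set dvec : Fin k → ℝ := fun a => if a = 0 then (k:ℝ) else 0 with hdvec
  have hJW : W' * J * W = Matrix.diagonal dvec := by
    have hJWcol : J * W = Matrix.of fun _ j => if j = 0 then (k:ℝ) else 0 := by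
      ext l j
      rw [Matrix.mul_apply, Matrix.of_apply]
      simp_rw [hJ, Matrix.of_apply, one_mul]
      exact colsum j
    rw [mul_assoc, hJWcol]
    ext i j
    rw [Matrix.mul_apply]
    simp_rw [Matrix.of_apply]
    rw [← Finset.sum_mul, rowsum i]
    by_cases hi : i = 0 <;> by_cases hj : j = 0
    · simp [Matrix.diagonal_apply, hdvec, hi, hj]
    · subst hi; simp [Matrix.diagonal_apply, hdvec, hj, Ne.symm hj]
    · subst hj; simp [Matrix.diagonal_apply, hdvec, hi]
    · simp [Matrix.diagonal_apply, hdvec, hi, hj]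
  -- conjugation
  have hPP : (W' ⊗ₖ (1 : Matrix V V ℝ)) * (W ⊗ₖ (1 : Matrix V V ℝ)) = 1 := by
    rw [← Matrix.mul_kronecker_mul, hW'W, Matrix.one_mul, Matrix.one_kronecker_one]
  have hconj : (W' ⊗ₖ (1 : Matrix V V ℝ)) * (J ⊗ₖ B) * (W ⊗ₖ (1 : Matrix V V ℝ))
      = (Matrix.diagonal dvec) ⊗ₖ B := by
    rw [← Matrix.mul_kronecker_mul, ← Matrix.mul_kronecker_mul, Matrix.one_mul, Matrix.mul_one,
      hJW]
  have hcpM : (absMatrix (shadowGraph k G)).charpoly = ((Matrix.diagonal dvec) ⊗ₖ B).charpoly := by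
    rw [hMJB, ← hconj, my_charpoly_conj _ _ _ hPP]
  -- block-diagonal structure
  have hcp2 : (absMatrix (shadowGraph k G)).charpoly = ∏ a : Fin k, (dvec a • B).charpoly := by
    rw [hcpM, Matrix.kroneckerMap_diagonal_left _ (fun b => zero_mul b) _ _,
      Matrix.charpoly_reindex, my_charpoly_blockDiagonal]
    refine Finset.prod_congr rfl fun a _ => ?_
    congr 1
  have hsplit : ∏ a : Fin k, (dvec a • B).charpoly
      = (((k:ℝ)) • B).charpoly * (X:ℝ[X]) ^ (n * (k-1)) := by
    have hz : ∀ a ∈ Finset.univ.erase (0 : Fin k), (dvec a • B).charpoly = (X:ℝ[X])^n := by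
      intro a ha
      have h0 : dvec a = 0 := by simp [hdvec, (Finset.mem_erase.mp ha).1]
      rw [h0, zero_smul]
      rw [show (0 : Matrix V V ℝ) = Matrix.diagonal (fun _ => (0:ℝ)) by simp,
        my_charpoly_diagonal]
      simp [hn, Finset.prod_const, Finset.card_univ]
    have h00 : dvec 0 • B = (k:ℝ) • B := by simp [hdvec]
    rw [← Finset.mul_prod_erase Finset.univ _ (Finset.mem_univ (0 : Fin k)), h00,
      Finset.prod_congr rfl hz, Finset.prod_const, Finset.card_erase_of_mem (Finset.mem_univ _),
      Finset.card_univ, Fintype.card_fin, ← pow_mul]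
  have hkB : ((k:ℝ)) • B = ((k:ℝ)*c) • A := by rw [hB, smul_smul]
  have hcpkB : (((k:ℝ)) • B).charpoly = ∏ j, (X - C (((k:ℝ)*c) * h2.eigenvalues j)) := by
    rw [hkB]; exact my_charpoly_smul_hermitian h2 _
  have hcpM2 : (absMatrix (shadowGraph k G)).charpoly = ∏ i, (X - C (h1.eigenvalues i)) := by
    have := my_charpoly_smul_hermitian h1 1
    simpa using this
  have hms : (Finset.univ.val.map h1.eigenvalues)
      = (Finset.univ.val.map fun j => ((k:ℝ)*c) * h2.eigenvalues j)
        + Multiset.replicate (n*(k-1)) 0 := by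
    apply my_eigen_multiset
    rw [← hcpM2, hcp2, hsplit, hcpkB]
  have hsum : ∑ i, |h1.eigenvalues i| = ((k:ℝ)*c) * ∑ j, |h2.eigenvalues j| := by
    have e1 : ∑ i, |h1.eigenvalues i|
        = ((Finset.univ.val.map h1.eigenvalues).map fun x => |x|).sum := by
      rw [Finset.sum_eq_multiset_sum, Multiset.map_map]; rfl
    rw [e1, hms, Multiset.map_add, Multiset.sum_add, Multiset.map_replicate, Multiset.map_map]
    have e2 : ((Finset.univ.val.map fun j => |((k:ℝ)*c) * h2.eigenvalues j|)).sum
        = ∑ j, |((k:ℝ)*c) * h2.eigenvalues j| := by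
      rw [Finset.sum_eq_multiset_sum]
    have hkc : (0:ℝ) ≤ (k:ℝ)*c := by positivity
    calc ((Finset.univ.val.map ((fun x => |x|) ∘ fun j => ((k:ℝ)*c) * h2.eigenvalues j)).sum
          + (Multiset.replicate (n*(k-1)) |(0:ℝ)|).sum)
        = ∑ j, |((k:ℝ)*c) * h2.eigenvalues j| := by
          rw [Multiset.sum_replicate]
          simp only [abs_zero, smul_zero, add_zero]
          rw [Finset.sum_eq_multiset_sum]
          rfl
      _ = ((k:ℝ)*c) * ∑ j, |h2.eigenvalues j| := by
          rw [Finset.mul_sum]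
          refine Finset.sum_congr rfl fun j _ => ?_
          rw [abs_mul, abs_of_nonneg hkc]
  rw [hsum]
  have hcc : Real.sqrt (1 - 1/((k:ℝ)*r)) = c := by
    rw [hc]
    congr 1
    field_simp
  rw [hcc]
end

section
/- Let G be an r-regular graph on n vertices and let Spl_k(G) be its k-splitting graph. Then the ABS matrix of Spl_k(G) equals D ⊗ A(G), where D is the (k+1)×(k+1) matrix with (1,1) entry √((2r(k+1)−2)/(2r(k+1))), all other entries in the first row and first column equal to √((r(k+2)−2)/(r(k+2))), and all remaining entries 0; the nonzero eigenvalues of D are (1/2)(√((2r(k+1)−2)/(2r(k+1))) ± √((2r(k+1)−2)/(2r(k+1)) + 4k(r(k+2)−2)/(r(k+2)))), together with 0 of multiplicity k−1. -/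
open Matrix Polynomial

/-- The `k`-splitting graph `Spl_k(G)`: to each vertex `x` of `G` add `k` new vertices
`x_1, …, x_k`, each joined to every neighbour of `x` in `G`. -/
def splittingGraph {V : Type*} (k : ℕ) (G : SimpleGraph V) :
    SimpleGraph (V ⊕ (Fin k × V)) where
  Adj x y := match x, y with
    | Sum.inl u, Sum.inl v => G.Adj u v
    | Sum.inl u, Sum.inr p => G.Adj u p.2
    | Sum.inr p, Sum.inl v => G.Adj p.2 v
    | Sum.inr _, Sum.inr _ => False
  symm := ⟨by rintro (u | p) (v | q) h <;> simp_all <;> exact h.symm⟩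
  loopless := ⟨by rintro (u | p) h <;> simp_all⟩

instance {V : Type*} (k : ℕ) (G : SimpleGraph V) [DecidableRel G.Adj] :
    DecidableRel (splittingGraph k G).Adj := by
  rintro (u | p) (v | q) <;> simp only [splittingGraph] <;> infer_instance

lemma splitting_adj_ll {V : Type*} (k : ℕ) (G : SimpleGraph V) (u v : V) :
    (splittingGraph k G).Adj (Sum.inl u) (Sum.inl v) ↔ G.Adj u v := Iff.rfl

lemma splitting_adj_lr {V : Type*} (k : ℕ) (G : SimpleGraph V) (u : V) (p : Fin k × V) :
    (splittingGraph k G).Adj (Sum.inl u) (Sum.inr p) ↔ G.Adj u p.2 := Iff.rfl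

lemma splitting_adj_rl {V : Type*} (k : ℕ) (G : SimpleGraph V) (p : Fin k × V) (v : V) :
    (splittingGraph k G).Adj (Sum.inr p) (Sum.inl v) ↔ G.Adj p.2 v := Iff.rfl

lemma splitting_adj_rr {V : Type*} (k : ℕ) (G : SimpleGraph V) (p q : Fin k × V) :
    ¬ (splittingGraph k G).Adj (Sum.inr p) (Sum.inr q) := fun h => h

lemma splitting_degree_inl {V : Type*} [Fintype V] [DecidableEq V]
    (G : SimpleGraph V) [DecidableRel G.Adj] (k : ℕ) (u : V) :
    (splittingGraph k G).degree (Sum.inl u) = G.degree u * (k + 1) := by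
  have hnf : (splittingGraph k G).neighborFinset (Sum.inl u) =
      ((G.neighborFinset u).map ⟨Sum.inl, Sum.inl_injective⟩) ∪
      ((Finset.univ ×ˢ G.neighborFinset u).map ⟨Sum.inr, Sum.inr_injective⟩) := by
    ext (v | p) <;>
      simp [SimpleGraph.mem_neighborFinset, splitting_adj_ll, splitting_adj_lr]
  have hdisj : Disjoint ((G.neighborFinset u).map ⟨Sum.inl, Sum.inl_injective⟩)
      (((Finset.univ : Finset (Fin k)) ×ˢ G.neighborFinset u).map
        ⟨Sum.inr, Sum.inr_injective⟩ : Finset (V ⊕ (Fin k × V))) := by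
    simp [Finset.disjoint_left]
  simp only [SimpleGraph.degree]
  rw [hnf, Finset.card_union_of_disjoint hdisj, Finset.card_map, Finset.card_map,
    Finset.card_product, Finset.card_univ, Fintype.card_fin]
  ring

lemma splitting_degree_inr {V : Type*} [Fintype V] [DecidableEq V]
    (G : SimpleGraph V) [DecidableRel G.Adj] (k : ℕ) (p : Fin k × V) :
    (splittingGraph k G).degree (Sum.inr p) = G.degree p.2 := by
  have hnf : (splittingGraph k G).neighborFinset (Sum.inr p) =
      ((G.neighborFinset p.2).map ⟨Sum.inl, Sum.inl_injective⟩) := by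
    ext (v | q) <;>
      simp [SimpleGraph.mem_neighborFinset, splitting_adj_rl, splitting_adj_rr]
  simp only [SimpleGraph.degree]
  rw [hnf, Finset.card_map]

lemma arrowhead_charpoly (k : ℕ) (hk : 1 ≤ k) (a b : ℝ)
    (D : Matrix (Fin (k+1)) (Fin (k+1)) ℝ)
    (hD : D = Matrix.of fun i j =>
      if i = 0 ∧ j = 0 then a else if i = 0 ∨ j = 0 then b else 0) :
    D.charpoly = X^(k+1) - C a * X^k - C ((k : ℝ) * b^2) * X^(k-1) := by
  obtain ⟨m, rfl⟩ : ∃ m, k = m + 1 := ⟨k - 1, (Nat.succ_pred_eq_of_pos hk).symm⟩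
  set K := FractionRing (Polynomial ℝ)
  set φ : Polynomial ℝ →+* K := algebraMap (Polynomial ℝ) K with hφ
  have hinj : Function.Injective φ := IsFractionRing.injective (Polynomial ℝ) K
  apply hinj
  have hxne : φ X ≠ 0 := fun h => by
    have := hinj (h.trans (map_zero φ).symm)
    simp [Polynomial.X_ne_zero] at this
  set e : (Fin 1 ⊕ Fin (m+1)) ≃ Fin (m+1+1) :=
    finSumFinEquiv.trans (finCongr (Nat.add_comm 1 (m+1))) with he
  have he0 : ∀ i : Fin 1, e (Sum.inl i) = 0 := by
    intro i
    have : (i : ℕ) = 0 := by omega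
    apply Fin.ext
    simp [he, finSumFinEquiv, Fin.castAdd, Fin.castLE, this]
  have heS : ∀ j : Fin (m+1), (e (Sum.inr j) : ℕ) = 1 + j := by
    intro j; simp [he, finSumFinEquiv, Fin.natAdd]
  have heSne : ∀ j : Fin (m+1), e (Sum.inr j) ≠ 0 := by
    intro j h
    have h2 := heS j
    rw [h] at h2
    simp at h2
    omega
  have hblock : ((charmatrix D).map φ).submatrix e e =
      Matrix.fromBlocks (Matrix.of fun _ _ => φ X - φ (C a))
        (Matrix.of fun _ _ => -φ (C b)) (Matrix.of fun _ _ => -φ (C b))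
        ((φ X) • (1 : Matrix (Fin (m+1)) (Fin (m+1)) K)) := by
    ext (i | i) (j | j)
    · rw [Matrix.submatrix_apply, Matrix.map_apply, he0 i, he0 j, charmatrix_apply_eq]
      simp [hD, map_sub]
    · rw [Matrix.submatrix_apply, Matrix.map_apply, he0 i,
        charmatrix_apply_ne _ _ _ (Ne.symm (heSne j))]
      simp [hD, heSne j]
    · rw [Matrix.submatrix_apply, Matrix.map_apply, he0 j,
        charmatrix_apply_ne _ _ _ (heSne i)]
      simp [hD, heSne i]
    · by_cases hij : i = j
      · subst hij
        rw [Matrix.submatrix_apply, Matrix.map_apply, charmatrix_apply_eq]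
        simp [hD, heSne i, Matrix.one_apply]
      · have hne : e (Sum.inr i) ≠ e (Sum.inr j) :=
          fun h => hij (Sum.inr_injective (e.injective h))
        rw [Matrix.submatrix_apply, Matrix.map_apply, charmatrix_apply_ne _ _ _ hne]
        simp [hD, heSne i, heSne j, Matrix.one_apply, hij]
  haveI : Invertible ((φ X) • (1 : Matrix (Fin (m+1)) (Fin (m+1)) K)) :=
    ⟨(φ X)⁻¹ • (1 : Matrix (Fin (m+1)) (Fin (m+1)) K),
      by rw [smul_mul_smul_comm, inv_mul_cancel₀ hxne, one_mul, one_smul],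
      by rw [smul_mul_smul_comm, mul_inv_cancel₀ hxne, one_mul, one_smul]⟩
  have hinv : ⅟((φ X) • (1 : Matrix (Fin (m+1)) (Fin (m+1)) K)) =
      (φ X)⁻¹ • (1 : Matrix (Fin (m+1)) (Fin (m+1)) K) :=
    invOf_eq_right_inv
      (by rw [smul_mul_smul_comm, mul_inv_cancel₀ hxne, one_mul, one_smul])
  have hdet : φ (D.charpoly) =
      (φ X) ^ (m+1) * ((φ X - φ (C a)) - (φ X)⁻¹ * (((m+1 : ℕ) : K) * φ (C b) ^ 2)) := by
    rw [Matrix.charpoly, RingHom.map_det, RingHom.mapMatrix_apply,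
      ← Matrix.det_submatrix_equiv_self e ((charmatrix D).map φ), hblock,
      Matrix.det_fromBlocks₂₂, hinv]
    have hBC : ((Matrix.of fun _ _ => -φ (C b) : Matrix (Fin 1) (Fin (m+1)) K) *
        ((φ X)⁻¹ • (1 : Matrix (Fin (m+1)) (Fin (m+1)) K)) *
        (Matrix.of fun _ _ => -φ (C b) : Matrix (Fin (m+1)) (Fin 1) K) :
          Matrix (Fin 1) (Fin 1) K) =
        Matrix.of fun _ _ => (φ X)⁻¹ * (((m+1 : ℕ) : K) * φ (C b) ^ 2) := by
      rw [Matrix.mul_smul, Matrix.mul_one, Matrix.smul_mul]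
      ext i j
      simp [Matrix.mul_apply, Finset.sum_const, mul_comm, sq]
      ring
    rw [hBC, Matrix.det_smul, Matrix.det_one]
    rw [show ((Matrix.of fun _ _ => φ X - φ (C a)) -
        Matrix.of fun _ _ => (φ X)⁻¹ * (((m+1 : ℕ) : K) * φ (C b) ^ 2) :
        Matrix (Fin 1) (Fin 1) K).det =
        (φ X - φ (C a)) - (φ X)⁻¹ * (((m+1 : ℕ) : K) * φ (C b) ^ 2) from by
      rw [Matrix.det_fin_one]; rfl]
    simp [Fintype.card_fin]
  rw [hdet]
  simp only [map_sub, _root_.map_mul, map_pow]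
  have hC : φ (C (((m+1 : ℕ) : ℝ))) = ((m+1 : ℕ) : K) := by
    rw [map_natCast, map_natCast]
  rw [hC]
  simp only [Nat.add_sub_cancel]
  have hXinv : φ X ^ (m+1) * (φ X)⁻¹ = φ X ^ m := by
    rw [pow_succ, mul_assoc, mul_inv_cancel₀ hxne, mul_one]
  linear_combination (-(((m+1 : ℕ) : K) * φ (C b) ^ 2)) * hXinv

/-- For an `r`-regular graph `G`, the ABS matrix of `Spl_k(G)` equals `D ⊗ A(G)` (up to the
canonical identification of `V ⊕ (Fin k × V)` with `Fin (k+1) × V`), where `D` is the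
arrowhead matrix with `(0,0)` entry `a = √((2r(k+1)−2)/(2r(k+1)))`, remaining first row and
column entries `b = √((r(k+2)−2)/(r(k+2)))`, and `0` elsewhere; the nonzero eigenvalues of
`D` are `(a ± √(a² + 4kb²))/2`, with `0` of multiplicity `k−1`. -/
theorem abs_matrix_splitting {V : Type*} [Fintype V] [DecidableEq V]
    (G : SimpleGraph V) [DecidableRel G.Adj] (r k : ℕ) (hr : 1 ≤ r) (hk : 1 ≤ k)
    (hreg : G.IsRegularOfDegree r)
    (a b : ℝ)
    (ha : a = Real.sqrt ((2 * (r : ℝ) * ((k : ℝ) + 1) - 2) / (2 * (r : ℝ) * ((k : ℝ) + 1))))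
    (hb : b = Real.sqrt (((r : ℝ) * ((k : ℝ) + 2) - 2) / ((r : ℝ) * ((k : ℝ) + 2))))
    (D : Matrix (Fin (k + 1)) (Fin (k + 1)) ℝ)
    (hD : D = Matrix.of fun i j =>
      if i = 0 ∧ j = 0 then a else if i = 0 ∨ j = 0 then b else 0) :
    absMatrix (splittingGraph k G) =
      (Matrix.kroneckerMap (· * ·) D (G.adjMatrix ℝ)).submatrix
        (Sum.elim (fun v => ((0 : Fin (k + 1)), v)) (fun p => (p.1.succ, p.2)))
        (Sum.elim (fun v => ((0 : Fin (k + 1)), v)) (fun p => (p.1.succ, p.2))) ∧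
    D.charpoly = X ^ (k - 1) *
      (X - C ((a + Real.sqrt (a ^ 2 + 4 * (k : ℝ) * b ^ 2)) / 2)) *
      (X - C ((a - Real.sqrt (a ^ 2 + 4 * (k : ℝ) * b ^ 2)) / 2)) := by
  have hrpos : (0:ℝ) < (r:ℝ) := by
    have : 0 < r := hr
    exact_mod_cast this
  have hkpos : (0:ℝ) < (k:ℝ) := by
    have : 0 < k := hk
    exact_mod_cast this
  constructor
  · ext x y
    match x, y with
    | Sum.inl u, Sum.inl v =>
      simp only [absMatrix, Matrix.of_apply, Matrix.submatrix_apply, Sum.elim_inl,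
        Matrix.kroneckerMap_apply, SimpleGraph.adjMatrix_apply, hD]
      simp only [splitting_adj_ll]
      simp only [eq_self_iff_true, true_and, true_or, if_true]
      by_cases h : G.Adj u v
      · rw [if_pos h, if_pos h, mul_one]
        rw [splitting_degree_inl, hreg u, splitting_degree_inl, hreg v, ha]
        congr 1
        have hcast : ((r * (k+1) : ℕ) : ℝ) = (r:ℝ) * ((k:ℝ) + 1) := by push_cast; ring
        rw [hcast]
        have hne : 2 * (r:ℝ) * ((k:ℝ) + 1) ≠ 0 := by positivity
        field_simp
        ring
      · rw [if_neg h, if_neg h, mul_zero]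
    | Sum.inl u, Sum.inr q =>
      simp only [absMatrix, Matrix.of_apply, Matrix.submatrix_apply, Sum.elim_inl,
        Sum.elim_inr, Matrix.kroneckerMap_apply, SimpleGraph.adjMatrix_apply, hD]
      simp only [splitting_adj_lr]
      simp only [eq_self_iff_true, true_and, true_or, if_true]
      rw [if_neg (Fin.succ_ne_zero q.1)]
      by_cases h : G.Adj u q.2
      · rw [if_pos h, if_pos h, mul_one]
        rw [splitting_degree_inl, splitting_degree_inr, hreg u, hreg q.2, hb]
        congr 1
        have hcast : ((r * (k+1) : ℕ) : ℝ) = (r:ℝ) * ((k:ℝ) + 1) := by push_cast; ring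
        rw [hcast]
        have hne : (r:ℝ) * ((k:ℝ) + 2) ≠ 0 := by positivity
        have hne2 : (r:ℝ) * ((k:ℝ) + 1) + (r:ℝ) ≠ 0 := by positivity
        field_simp
        ring
      · rw [if_neg h, if_neg h, mul_zero]
    | Sum.inr p, Sum.inl v =>
      simp only [absMatrix, Matrix.of_apply, Matrix.submatrix_apply, Sum.elim_inl,
        Sum.elim_inr, Matrix.kroneckerMap_apply, SimpleGraph.adjMatrix_apply, hD]
      simp only [splitting_adj_rl]
      simp only [eq_self_iff_true, and_true, or_true, if_true]
      rw [if_neg (Fin.succ_ne_zero p.1)]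
      by_cases h : G.Adj p.2 v
      · rw [if_pos h, if_pos h, mul_one]
        rw [splitting_degree_inl, splitting_degree_inr, hreg v, hreg p.2, hb]
        congr 1
        have hcast : ((r * (k+1) : ℕ) : ℝ) = (r:ℝ) * ((k:ℝ) + 1) := by push_cast; ring
        rw [hcast]
        have hne : (r:ℝ) * ((k:ℝ) + 2) ≠ 0 := by positivity
        have hne2 : (r:ℝ) + (r:ℝ) * ((k:ℝ) + 1) ≠ 0 := by positivity
        field_simp
        ring
      · rw [if_neg h, if_neg h, mul_zero]
    | Sum.inr p, Sum.inr q =>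
      simp only [absMatrix, Matrix.of_apply, Matrix.submatrix_apply,
        Sum.elim_inr, Matrix.kroneckerMap_apply, SimpleGraph.adjMatrix_apply, hD]
      rw [if_neg (splitting_adj_rr k G p q)]
      rw [if_neg (fun h => (Fin.succ_ne_zero p.1) h.1),
        if_neg (fun h => h.elim (Fin.succ_ne_zero p.1) (Fin.succ_ne_zero q.1)),
        zero_mul]
  · rw [arrowhead_charpoly k hk a b D hD]
    set s := Real.sqrt (a^2 + 4*(k:ℝ)*b^2) with hs
    have hnn : 0 ≤ a^2 + 4*(k:ℝ)*b^2 := by positivity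
    have hs2 : s^2 = a^2 + 4*(k:ℝ)*b^2 := Real.sq_sqrt hnn
    have h1 : C a = C ((a+s)/2) + C ((a-s)/2) := by
      rw [← Polynomial.C_add]
      congr 1
      ring
    have h2 : C ((k:ℝ)*b^2) = -(C ((a+s)/2) * C ((a-s)/2)) := by
      rw [← Polynomial.C_mul, ← Polynomial.C_neg]
      congr 1
      linear_combination (-(1:ℝ)/4) * hs2
    obtain ⟨m, rfl⟩ : ∃ m, k = m + 1 := ⟨k - 1, (Nat.succ_pred_eq_of_pos hk).symm⟩
    simp only [Nat.add_sub_cancel]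
    rw [h1, h2]
    ring
end

section
/- Let G be a connected graph of order n ≥ 4 with ABS eigenvalues μ_1,…,μ_n and modified second Zagreb index R_{−1}(G) = Σ_{v_i v_j ∈ E(G)} 1/(d_i d_j). Then Σ_{i=1}^n μ_i² ≤ (n−1)(n − 2R_{−1}(G)). -/
open Matrix

lemma pointwise_ineq (c a b : ℝ) (ha : 1 ≤ a) (hb : 1 ≤ b) (hac : a ≤ c) (hbc : b ≤ c) :
    1 - 2 / (a + b) ≤ c * (1 / (2 * a) + 1 / (2 * b) - 1 / (a * b)) := by
  have ha0 : 0 < a := by linarith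
  have hb0 : 0 < b := by linarith
  have hab : 0 < a + b := by linarith
  have e1 : 1 - 2/(a+b) = (a+b-2)/(a+b) := by field_simp
  have e2 : 1/(2*a)+1/(2*b)-1/(a*b) = (a+b-2)/(2*(a*b)) := by field_simp; ring
  have h2 : 2 * (a * b) ≤ c * (a + b) := by nlinarith
  rw [e1, e2, mul_div_assoc', div_le_div_iff₀ hab (by positivity)]
  nlinarith [mul_le_mul_of_nonneg_left h2 (show (0:ℝ) ≤ a+b-2 by linarith)]

lemma trace_sq_eq (n : ℕ) (A : Matrix (Fin n) (Fin n) ℝ) (hA : A.IsHermitian) :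
    (A * A).trace = ∑ i, hA.eigenvalues i ^ 2 := by
  conv_lhs => rw [hA.spectral_theorem]
  set U := (hA.eigenvectorUnitary : Matrix (Fin n) (Fin n) ℝ)
  set D : Matrix (Fin n) (Fin n) ℝ := Matrix.diagonal (RCLike.ofReal ∘ hA.eigenvalues) with hD
  have hU : star U * U = 1 := (Matrix.mem_unitaryGroup_iff').mp hA.eigenvectorUnitary.2
  have : (U * D * star U) * (U * D * star U) = U * (D * D) * star U := by
    simp only [mul_assoc]
    rw [← mul_assoc (star U) U, hU, one_mul]
  rw [Unitary.conjStarAlgAut_apply, this, Matrix.trace_mul_cycle, ← mul_assoc, hU, one_mul, hD,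
    Matrix.diagonal_mul_diagonal, Matrix.trace_diagonal]
  simp [sq]

/-- For a connected graph `G` of order `n ≥ 4` with ABS eigenvalues `μ_1, …, μ_n` and
modified second Zagreb index `R_{−1}(G) = Σ_{edges} 1/(d_i d_j)`:
`Σ μ_i² ≤ (n−1)(n − 2R_{−1}(G))`. -/
theorem abs_eigenvalues_sq_sum_le (n : ℕ) (hn : 4 ≤ n) (G : SimpleGraph (Fin n))
    [DecidableRel G.Adj] (hconn : G.Connected)
    (hherm : (absMatrix G).IsHermitian)
    (R : ℝ)
    (hR : R = (1 / 2) * ∑ i : Fin n, ∑ j : Fin n,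
      if G.Adj i j then 1 / ((G.degree i : ℝ) * (G.degree j : ℝ)) else 0) :
    ∑ i, (hherm.eigenvalues i) ^ 2 ≤ ((n : ℝ) - 1) * ((n : ℝ) - 2 * R) := by
  have hdeg : ∀ i : Fin n, 0 < G.degree i := by
    intro i
    rw [G.degree_pos_iff_exists_adj]
    have : Nontrivial (Fin n) := Fin.nontrivial_iff_two_le.mpr (by omega)
    obtain ⟨j, hj⟩ := exists_ne i
    obtain ⟨w⟩ := hconn.preconnected i j
    cases w with
    | nil => exact absurd rfl (Ne.symm hj)
    | cons h p => exact ⟨_, h⟩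
  have hdeg1 : ∀ i : Fin n, (1:ℝ) ≤ (G.degree i : ℝ) := fun i => by exact_mod_cast hdeg i
  have hdegn : ∀ i : Fin n, (G.degree i : ℝ) ≤ (n:ℝ) - 1 := by
    intro i
    have h := G.degree_lt_card_verts i
    rw [Fintype.card_fin] at h
    have h1 : (G.degree i : ℝ) ≤ ((n - 1 : ℕ) : ℝ) := by
      exact_mod_cast (by omega : G.degree i ≤ n - 1)
    rwa [Nat.cast_sub (by omega), Nat.cast_one] at h1
  -- sum of eigenvalue squares as a double sum
  have hsum : ∑ i, (hherm.eigenvalues i) ^ 2 =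
      ∑ i : Fin n, ∑ j : Fin n,
        (if G.Adj i j then 1 - 2 / ((G.degree i : ℝ) + (G.degree j : ℝ)) else 0) := by
    rw [← trace_sq_eq n _ hherm, Matrix.trace]
    simp only [Matrix.diag_apply, Matrix.mul_apply]
    refine Finset.sum_congr rfl fun i _ => Finset.sum_congr rfl fun j _ => ?_
    by_cases h : G.Adj i j
    · simp only [absMatrix, Matrix.of_apply, h, h.symm, if_true,
        add_comm ((G.degree j : ℝ)) ((G.degree i : ℝ))]
      rw [← sq, Real.sq_sqrt]
      have h2 : (2:ℝ) ≤ (G.degree i : ℝ) + (G.degree j : ℝ) := by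
        have := hdeg1 i; have := hdeg1 j; linarith
      have hpos : 0 < (G.degree i : ℝ) + (G.degree j : ℝ) := by linarith
      rw [sub_nonneg, div_le_one hpos]; linarith
    · simp [absMatrix, h, show ¬ G.Adj j i from fun hh => h hh.symm]
  -- counting lemma
  have hcount : ∀ f : Fin n → ℝ, ∀ i : Fin n,
      ∑ j : Fin n, (if G.Adj i j then f i else 0) = (G.degree i : ℝ) * f i := by
    intro f i
    rw [← Finset.sum_filter, Finset.sum_const, nsmul_eq_mul]
    congr 1
    rw [← SimpleGraph.neighborFinset_eq_filter, SimpleGraph.card_neighborFinset_eq_degree]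
  -- n as a double sum
  have hn' : (n : ℝ) = ∑ i : Fin n, ∑ j : Fin n,
      (if G.Adj i j then 1/(2*(G.degree i : ℝ)) + 1/(2*(G.degree j : ℝ)) else 0) := by
    have split : ∀ i j : Fin n,
        (if G.Adj i j then 1/(2*(G.degree i : ℝ)) + 1/(2*(G.degree j : ℝ)) else 0)
        = (if G.Adj i j then 1/(2*(G.degree i : ℝ)) else 0)
          + (if G.Adj i j then 1/(2*(G.degree j : ℝ)) else 0) := by
      intro i j; by_cases h : G.Adj i j <;> simp [h]
    simp only [split, Finset.sum_add_distrib]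
    have e1 : ∑ i : Fin n, ∑ j : Fin n, (if G.Adj i j then 1/(2*(G.degree i : ℝ)) else 0)
        = (n : ℝ)/2 := by
      have : ∀ i : Fin n, ∑ j : Fin n, (if G.Adj i j then 1/(2*(G.degree i : ℝ)) else 0)
          = 1/2 := by
        intro i
        rw [hcount (fun i => 1/(2*(G.degree i : ℝ))) i]
        have : (G.degree i : ℝ) ≠ 0 := by have := hdeg1 i; linarith
        field_simp
      rw [Finset.sum_congr rfl fun i _ => this i, Finset.sum_const, Finset.card_univ,
        Fintype.card_fin, nsmul_eq_mul]
      ring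
    have e2 : ∑ i : Fin n, ∑ j : Fin n, (if G.Adj i j then 1/(2*(G.degree j : ℝ)) else 0)
        = (n : ℝ)/2 := by
      rw [Finset.sum_comm]
      rw [← e1]
      exact Finset.sum_congr rfl fun j _ => Finset.sum_congr rfl fun i _ => by
        by_cases h : G.Adj i j
        · simp [h, h.symm]
        · simp [h, show ¬ G.Adj j i from fun hh => h hh.symm]
    rw [e1, e2]; ring
  -- 2R as a double sum
  have h2R : 2 * R = ∑ i : Fin n, ∑ j : Fin n,
      (if G.Adj i j then 1 / ((G.degree i : ℝ) * (G.degree j : ℝ)) else 0) := by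
    rw [hR]; ring
  -- main estimate
  set c : ℝ := (n:ℝ) - 1 with hc
  have hrhs : c * ((n:ℝ) - 2*R) = ∑ i : Fin n, ∑ j : Fin n,
      (if G.Adj i j then c * (1/(2*(G.degree i : ℝ)) + 1/(2*(G.degree j : ℝ))
        - 1/((G.degree i : ℝ) * (G.degree j : ℝ))) else 0) := by
    rw [hn', h2R, ← Finset.sum_sub_distrib, Finset.mul_sum]
    refine Finset.sum_congr rfl fun i _ => ?_
    rw [← Finset.sum_sub_distrib, Finset.mul_sum]
    refine Finset.sum_congr rfl fun j _ => ?_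
    by_cases h : G.Adj i j <;> simp [h]
  rw [hsum, hrhs]
  refine Finset.sum_le_sum fun i _ => Finset.sum_le_sum fun j _ => ?_
  by_cases h : G.Adj i j
  · simp only [h, if_true]
    exact pointwise_ineq c _ _ (hdeg1 i) (hdeg1 j) (hdegn i) (hdegn j)
  · simp [h]
end
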